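/- Let f : ℝⁿ × ℝ → ℝⁿ be continuously differentiable in its first (state) variable and continuous in its second (time) variable, let δ : ℝ → ℝⁿ be continuous, and let α : [t₀,∞) → ℝ be continuous. Assume that for all x ∈ ℝⁿ, all t ≥ t₀, and all v ∈ ℝⁿ, ⟪Dₓf(x,t) v, v⟫ ≤ −α(t) ‖v‖². If x, x* : [t₀,∞) → ℝⁿ are two differentiable functions satisfying x'(t) = f(x(t), t) + δ(t) and x*'(t) = f(x*(t), t) + δ(t) for all t ≥ t₀, then ‖x(t) − x*(t)‖ ≤ exp(−∫_{t₀}^{t} α(τ) dτ) ‖x(t₀) − x*(t₀)‖ for all t ≥ t₀. -/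

import Mathlib

open Filter Topology Set
open scoped RealInnerProductSpace

/-- Remark 2, relaxed hypothesis. If
`⟪Dₓf(x,t)v, v⟫ ≤ -α(t)‖v‖²` (α not necessarily bounded away from 0), then any
two solutions of `ẋ = f(x,t) + δ(t)` satisfy
`‖x(t) - x*(t)‖ ≤ exp(-∫_{t₀}^t α) ‖x(t₀) - x*(t₀)‖`. -/
theorem incremental_stability_integral_bound {n : ℕ} (hn : 1 ≤ n) (t₀ : ℝ)
    (f : EuclideanSpace ℝ (Fin n) → ℝ → EuclideanSpace ℝ (Fin n))
    (δ : ℝ → EuclideanSpace ℝ (Fin n))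
    (hf : ∀ t, t₀ ≤ t → ContDiff ℝ 1 (fun y => f y t))
    (hft : ∀ y, ContinuousOn (fun t => f y t) (Set.Ici t₀))
    (hδ : Continuous δ)
    (α : ℝ → ℝ) (hα : ContinuousOn α (Set.Ici t₀))
    (hμ : ∀ (x : EuclideanSpace ℝ (Fin n)) (t : ℝ), t₀ ≤ t →
      ∀ v : EuclideanSpace ℝ (Fin n),
        ⟪fderiv ℝ (fun y => f y t) x v, v⟫ ≤ -α t * ‖v‖ ^ 2)
    (x xs : ℝ → EuclideanSpace ℝ (Fin n))
    (hx : ∀ t, t₀ ≤ t → HasDerivAt x (f (x t) t + δ t) t)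
    (hxs : ∀ t, t₀ ≤ t → HasDerivAt xs (f (xs t) t + δ t) t) :
    ∀ t, t₀ ≤ t →
      ‖x t - xs t‖ ≤ Real.exp (-∫ τ in t₀..t, α τ) * ‖x t₀ - xs t₀‖ := by
  intro T hT
  set e : ℝ → EuclideanSpace ℝ (Fin n) := fun t => x t - xs t with he
  have he' : ∀ t, t₀ ≤ t → HasDerivAt e (f (x t) t - f (xs t) t) t := by
    intro t ht
    have := (hx t ht).sub (hxs t ht)
    exact this.congr_deriv (by abel)
  -- key pointwise inequality via mean value theorem along the segment
  have key : ∀ t, t₀ ≤ t → ⟪f (x t) t - f (xs t) t, e t⟫ ≤ -α t * ‖e t‖ ^ 2 := by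
    intro t ht
    set a := xs t with ha
    set b := x t with hb
    have hdf : Differentiable ℝ (fun y => f y t) := (hf t ht).differentiable one_ne_zero
    set h : ℝ → ℝ := fun s => ⟪f (a + s • (b - a)) t, b - a⟫ with hh
    have hd : ∀ s : ℝ, HasDerivAt h
        ⟪(fderiv ℝ (fun y => f y t) (a + s • (b - a))) (b - a), b - a⟫ s := by
      intro s
      have hc : HasDerivAt (fun s : ℝ => a + s • (b - a)) (b - a) s := by
        simpa using ((hasDerivAt_id s).smul_const (b - a)).const_add a
      have hF : HasDerivAt (fun s : ℝ => f (a + s • (b - a)) t)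
          ((fderiv ℝ (fun y => f y t) (a + s • (b - a))) (b - a)) s :=
        (hdf (a + s • (b - a))).hasFDerivAt.comp_hasDerivAt (l := fun y => f y t) (f := fun s : ℝ => a + s • (b - a)) s hc
      have := hF.inner ℝ (hasDerivAt_const s (b - a))
      simpa using this
    obtain ⟨c, _, hc⟩ := exists_hasDerivAt_eq_slope h _ (by norm_num : (0:ℝ) < 1)
      (fun s _ => (hd s).continuousAt.continuousWithinAt) (fun s _ => hd s)
    have h10 : h 1 - h 0 = ⟪f b t - f a t, b - a⟫ := by
      simp [hh, inner_sub_left]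
    have : h 1 - h 0 ≤ -α t * ‖b - a‖ ^ 2 := by
      rw [show h 1 - h 0 = (h 1 - h 0) / (1 - 0) by norm_num, ← hc]
      exact hμ _ t ht _
    rw [h10] at this
    simpa [he] using this
  -- the integral of α
  set A : ℝ → ℝ := fun t => ∫ τ in t₀..t, α τ with hA
  have hint : ∀ t, t₀ ≤ t → IntervalIntegrable α MeasureTheory.volume t₀ t := by
    intro t ht
    exact (hα.mono (by rw [Set.uIcc_of_le ht]; exact Set.Icc_subset_Ici_self)).intervalIntegrable
  have hA' : ∀ t, t₀ < t → HasDerivAt A (α t) t := by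
    intro t ht
    have hct : ContinuousAt α t :=
      (hα t ht.le).continuousAt (Ici_mem_nhds ht)
    exact intervalIntegral.integral_hasDerivAt_right (hint t ht.le)
      ((hα.mono Set.Ioi_subset_Ici_self).stronglyMeasurableAtFilter isOpen_Ioi t ht) hct
  rcases eq_or_lt_of_le hT with rfl | hT'
  · simp
  -- continuity of A on Icc t₀ T
  have hAc : ContinuousOn A (Set.Icc t₀ T) := by
    have := intervalIntegral.continuousOn_primitive_interval
      (μ := MeasureTheory.volume) (f := α) (a := t₀) (b := T)
      ((hα.mono (by rw [Set.uIcc_of_le hT]; exact Set.Icc_subset_Ici_self)).integrableOn_compact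
        (by rw [Set.uIcc_of_le hT]; exact isCompact_Icc))
    rwa [Set.uIcc_of_le hT] at this
  set φ : ℝ → ℝ := fun t => Real.exp (2 * A t) * ‖e t‖ ^ 2 with hφ
  have hg : ∀ t, t₀ ≤ t →
      HasDerivAt (fun t => ‖e t‖ ^ 2) (2 * ⟪f (x t) t - f (xs t) t, e t⟫) t := by
    intro t ht
    have := (he' t ht).inner ℝ (he' t ht)
    have h2 : (fun t => ‖e t‖ ^ 2) = fun t => ⟪e t, e t⟫ := by
      funext t; rw [real_inner_self_eq_norm_sq]
    rw [h2]
    refine this.congr_deriv ?_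
    rw [real_inner_comm]; ring
  have hφd : ∀ t ∈ Set.Ioo t₀ T, HasDerivAt φ
      (Real.exp (2 * A t) * (2 * α t) * ‖e t‖ ^ 2
        + Real.exp (2 * A t) * (2 * ⟪f (x t) t - f (xs t) t, e t⟫)) t := by
    intro t ht
    have hexp : HasDerivAt (fun t => Real.exp (2 * A t))
        (Real.exp (2 * A t) * (2 * α t)) t := by
      simpa [mul_comm, mul_assoc] using (((hA' t ht.1).const_mul 2).exp)
    exact hexp.mul (hg t ht.1.le)
  have hφ_nonpos : ∀ t ∈ Set.Ioo t₀ T, deriv φ t ≤ 0 := by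
    intro t ht
    rw [(hφd t ht).deriv]
    have hk := key t ht.1.le
    have hep : (0:ℝ) < Real.exp (2 * A t) := Real.exp_pos _
    nlinarith [hep, hk]
  have hφc : ContinuousOn φ (Set.Icc t₀ T) := by
    apply ContinuousOn.mul
    · exact Real.continuous_exp.comp_continuousOn (continuousOn_const.mul hAc)
    · intro t ht
      exact (((he' t ht.1).continuousAt).norm.pow 2).continuousWithinAt
  have hanti : AntitoneOn φ (Set.Icc t₀ T) := by
    apply antitoneOn_of_deriv_nonpos (convex_Icc t₀ T) hφc
    · rw [interior_Icc]
      exact fun t ht => (hφd t ht).differentiableAt.differentiableWithinAt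
    · rw [interior_Icc]; exact hφ_nonpos
  have h1 := hanti (Set.left_mem_Icc.2 hT'.le) (Set.right_mem_Icc.2 hT'.le) hT'.le
  have hA0 : A t₀ = 0 := intervalIntegral.integral_same
  rw [hφ] at h1
  simp only [hA0, mul_zero, Real.exp_zero, one_mul] at h1
  -- h1 : exp (2 * A T) * ‖e T‖^2 ≤ ‖e t₀‖^2
  have hsq : ‖e T‖ ^ 2 ≤ (Real.exp (-A T) * ‖e t₀‖) ^ 2 := by
    have hep : (0:ℝ) < Real.exp (2 * A T) := Real.exp_pos _
    have h3 := mul_le_mul_of_nonneg_left h1 (inv_nonneg.2 hep.le)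
    rw [← mul_assoc, inv_mul_cancel₀ hep.ne', one_mul] at h3
    have h4 : Real.exp (-A T) ^ 2 = (Real.exp (2 * A T))⁻¹ := by
      rw [← Real.exp_neg]
      rw [sq, ← Real.exp_add]
      ring_nf
    rw [mul_pow, h4]
    exact h3
  have := Real.sqrt_le_sqrt hsq
  rwa [Real.sqrt_sq (norm_nonneg _), Real.sqrt_sq (by positivity)] at this
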